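/- (Theorem 1, logarithmic form) Let M ≥ 1, let a_i > 0 and b_i > 0 for i = 1,…,M, set c_i = (1 + e^{a_i b_i})/e^{a_i b_i}, d_i = 1/(1 + e^{a_i b_i}) and U_i(P) = c_i·(1/(1 + e^{-a_i(P-b_i)}) − d_i), and let P_T > 0. Then there exists a unique point P* in the feasible set F = { P ∈ ℝ^M : P_i > 0 for all i and Σ_{i=1}^M P_i ≤ P_T } that maximizes the objective Σ_{i=1}^M log U_i(P_i) over F. -/

import Mathlib

open Real Finset

open Filter

noncomputable def glog (α K x : ℝ) : ℝ :=
  Real.log (Real.exp (α*x) - 1) - Real.log (Real.exp (α*x) + K)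

lemma exp_gt_one' {α x : ℝ} (hα : 0 < α) (hx : 0 < x) : 1 < Real.exp (α*x) := by
  rw [show (1:ℝ) = Real.exp 0 by simp]
  exact Real.exp_lt_exp.2 (by positivity)

lemma glog_contOn {α K : ℝ} (hα : 0 < α) (hK : 0 < K) :
    ContinuousOn (glog α K) (Set.Ioi 0) := by
  intro x hx
  have h1 : (1:ℝ) < Real.exp (α*x) := exp_gt_one' hα hx
  have hc : ContinuousAt (fun y => Real.exp (α*y)) x :=
    (Real.continuous_exp.comp (continuous_const.mul continuous_id)).continuousAt
  exact (((Real.continuousAt_log (by simp only [Pi.sub_apply]; nlinarith)).comp (hc.sub continuousAt_const)).sub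
    ((Real.continuousAt_log (by simp only [Pi.add_apply]; nlinarith)).comp (hc.add continuousAt_const))).continuousWithinAt

lemma glog_strictMono {α K : ℝ} (hα : 0 < α) (hK : 0 < K) :
    StrictMonoOn (glog α K) (Set.Ioi 0) := by
  intro x hx y hy hxy
  simp only [Set.mem_Ioi] at hx hy
  have hex := exp_gt_one' hα hx
  have hey := exp_gt_one' hα hy
  have hlt : Real.exp (α*x) < Real.exp (α*y) := Real.exp_lt_exp.2 (by nlinarith)
  unfold glog
  rw [← Real.log_div (by nlinarith) (by nlinarith), ← Real.log_div (by nlinarith) (by nlinarith)]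
  apply Real.log_lt_log (div_pos (by nlinarith) (by nlinarith))
  rw [div_lt_div_iff₀ (by nlinarith) (by nlinarith)]
  nlinarith

lemma glog_hasDeriv {α K : ℝ} (hα : 0 < α) (hK : 0 < K) {x : ℝ} (hx : 0 < x) :
    HasDerivAt (glog α K)
      (Real.exp (α*x) * α / (Real.exp (α*x) - 1) - Real.exp (α*x) * α / (Real.exp (α*x) + K)) x := by
  have hex := exp_gt_one' hα hx
  have hl : HasDerivAt (fun y => α*y) α x := by
    simpa using (hasDerivAt_id x).const_mul α
  have he : HasDerivAt (fun y => Real.exp (α*y)) (Real.exp (α*x) * α) x := hl.exp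
  exact ((he.sub_const 1).log (by nlinarith)).sub ((he.add_const K).log (by nlinarith))

lemma glog_strictConcave {α K : ℝ} (hα : 0 < α) (hK : 0 < K) :
    StrictConcaveOn ℝ (Set.Ioi 0) (glog α K) := by
  apply StrictAntiOn.strictConcaveOn_of_deriv (convex_Ioi 0) (glog_contOn hα hK)
  rw [interior_Ioi]
  intro x hx y hy hxy
  simp only [Set.mem_Ioi] at hx hy
  rw [(glog_hasDeriv hα hK hx).deriv, (glog_hasDeriv hα hK hy).deriv]
  have hs := exp_gt_one' hα hx
  have ht := exp_gt_one' hα hy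
  have hst : Real.exp (α*x) < Real.exp (α*y) := Real.exp_lt_exp.2 (by nlinarith)
  set s := Real.exp (α*x) with hsdef
  set t := Real.exp (α*y) with htdef
  have hs1 : s - 1 ≠ 0 := by nlinarith
  have hsK : s + K ≠ 0 := by nlinarith
  have ht1 : t - 1 ≠ 0 := by nlinarith
  have htK : t + K ≠ 0 := by nlinarith
  have e1 : s*α/(s-1) - s*α/(s+K) = (α*(K+1)) * (s/((s-1)*(s+K))) := by
    rw [div_sub_div _ _ hs1 hsK, mul_comm (α*(K+1)), div_mul_eq_mul_div]
    congr 1; ring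
  have e2 : t*α/(t-1) - t*α/(t+K) = (α*(K+1)) * (t/((t-1)*(t+K))) := by
    rw [div_sub_div _ _ ht1 htK, mul_comm (α*(K+1)), div_mul_eq_mul_div]
    congr 1; ring
  rw [e1, e2]
  apply mul_lt_mul_of_pos_left _ (by positivity)
  rw [div_lt_div_iff₀ (by nlinarith) (by nlinarith)]
  nlinarith [mul_pos (mul_pos (lt_trans one_pos hs) (lt_trans one_pos ht)) (sub_pos.2 hst),
    mul_pos hK (sub_pos.2 hst)]

lemma glog_tendsto_atBot {α K : ℝ} (hα : 0 < α) (hK : 0 < K) :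
    Tendsto (glog α K) (nhdsWithin 0 (Set.Ioi 0)) atBot := by
  have h1 : Tendsto (fun x => Real.exp (α*x) - 1) (nhdsWithin 0 (Set.Ioi 0))
      (nhdsWithin 0 (Set.Ioi 0)) := by
    apply tendsto_nhdsWithin_of_tendsto_nhds_of_eventually_within
    · have hcont : Continuous fun x : ℝ => Real.exp (α*x) - 1 := by continuity
      have := hcont.tendsto 0
      simp only [mul_zero, Real.exp_zero, sub_self] at this
      exact this.mono_left nhdsWithin_le_nhds
    · filter_upwards [self_mem_nhdsWithin] with x hx
      have := exp_gt_one' hα hx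
      simp only [Set.mem_Ioi]; linarith
  have hterm1 : Tendsto (fun x => Real.log (Real.exp (α*x) - 1)) (nhdsWithin 0 (Set.Ioi 0)) atBot :=
    Real.tendsto_log_nhdsGT_zero.comp h1
  have hterm : Tendsto (fun x => Real.log (Real.exp (α*x) - 1) + (- Real.log (1+K)))
      (nhdsWithin 0 (Set.Ioi 0)) atBot := tendsto_atBot_add_const_right _ _ hterm1
  apply tendsto_atBot_mono' _ _ hterm
  filter_upwards [self_mem_nhdsWithin] with x hx
  have hx0 : (0:ℝ) < x := hx
  have h2 : Real.log (1+K) ≤ Real.log (Real.exp (α*x) + K) := by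
    apply Real.log_le_log (by positivity)
    have := exp_gt_one' hα hx0
    linarith
  unfold glog
  linarith

/-- (Theorem 1, logarithmic form) For `M ≥ 1` users with sigmoidal-like utilities
`U_i(P) = c_i·(1/(1 + e^{-a_i(P-b_i)}) − d_i)` and total power `P_T > 0`, there is a
unique point of the feasible set `F = {P : ∀ i, P_i > 0, Σ P_i ≤ P_T}` maximizing
`Σ_i log U_i(P_i)` over `F`. -/
theorem exists_unique_maximizer_sum_log
    (M : ℕ) (hM : 1 ≤ M)
    (a b c d : Fin M → ℝ)
    (ha : ∀ i, 0 < a i) (hb : ∀ i, 0 < b i)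
    (hc : ∀ i, c i = (1 + Real.exp (a i * b i)) / Real.exp (a i * b i))
    (hd : ∀ i, d i = 1 / (1 + Real.exp (a i * b i)))
    (U : Fin M → ℝ → ℝ)
    (hU : ∀ i (P : ℝ), U i P = c i * (1 / (1 + Real.exp (-(a i) * (P - b i))) - d i))
    (PT : ℝ) (hPT : 0 < PT)
    (F : Set (Fin M → ℝ))
    (hF : F = {P : Fin M → ℝ | (∀ i, 0 < P i) ∧ ∑ i, P i ≤ PT}) :
    ∃! Pstar : Fin M → ℝ, Pstar ∈ F ∧
      ∀ Q ∈ F, ∑ i, Real.log (U i (Q i)) ≤ ∑ i, Real.log (U i (Pstar i)) := by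
  -- abbreviations
  set g : Fin M → ℝ → ℝ := fun i => glog (a i) (Real.exp (a i * b i)) with hg
  have hKpos : ∀ i, (0:ℝ) < Real.exp (a i * b i) := fun i => Real.exp_pos _
  -- U in rational form
  have hUeq : ∀ i (x : ℝ), U i x =
      (Real.exp (a i * x) - 1) / (Real.exp (a i * x) + Real.exp (a i * b i)) := by
    intro i x
    rw [hU, hc, hd]
    have hE : -(a i) * (x - b i) = a i * b i - a i * x := by ring
    rw [hE, Real.exp_sub]
    have h1 : (0:ℝ) < Real.exp (a i * b i) := Real.exp_pos _
    have h2 : (0:ℝ) < Real.exp (a i * x) := Real.exp_pos _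
    have h3 : Real.exp (a i * x) + Real.exp (a i * b i) ≠ 0 := by positivity
    have h4 : (1:ℝ) + Real.exp (a i * b i) ≠ 0 := by positivity
    have h5 : (1:ℝ) + Real.exp (a i * b i) / Real.exp (a i * x) ≠ 0 := by positivity
    field_simp
    ring
  -- log of U is glog
  have hUg : ∀ i (x : ℝ), 0 < x → Real.log (U i x) = g i x := by
    intro i x hx
    have hex := exp_gt_one' (ha i) hx
    rw [hUeq, Real.log_div (by nlinarith) (by positivity)]
    rfl
  -- per-coordinate facts
  have hmono : ∀ i, StrictMonoOn (g i) (Set.Ioi 0) :=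
    fun i => glog_strictMono (ha i) (hKpos i)
  have hconc : ∀ i, StrictConcaveOn ℝ (Set.Ioi 0) (g i) :=
    fun i => glog_strictConcave (ha i) (hKpos i)
  set S : (Fin M → ℝ) → ℝ := fun P => ∑ i, g i (P i) with hS
  -- sums agree on F
  have hSF : ∀ P ∈ F, (∑ i, Real.log (U i (P i))) = S P := by
    intro P hP
    rw [hF] at hP
    exact Finset.sum_congr rfl fun i _ => hUg i (P i) (hP.1 i)
  -- reference point
  have hM0 : (0:ℝ) < M := by exact_mod_cast hM
  set P0 : Fin M → ℝ := fun _ => PT / M with hP0def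
  have hP0pos : ∀ i, (0:ℝ) < P0 i := fun i => by positivity
  have hP0sum : ∑ i, P0 i = PT := by
    simp only [hP0def, Finset.sum_const, Finset.card_univ, Fintype.card_fin, nsmul_eq_mul]
    field_simp
  have hP0F : P0 ∈ F := by rw [hF]; exact ⟨hP0pos, le_of_eq hP0sum⟩
  -- choose ε
  set B : Fin M → ℝ := fun i => S P0 - 1 - ∑ j ∈ Finset.univ.erase i, g j PT with hB
  have hev1 : ∀ᶠ x in nhdsWithin 0 (Set.Ioi 0), ∀ i, g i x < B i := by
    rw [Filter.eventually_all]
    intro i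
    exact (glog_tendsto_atBot (ha i) (hKpos i)).eventually (eventually_lt_atBot (B i))
  have hev2 : ∀ᶠ x in nhdsWithin 0 (Set.Ioi 0), x < PT / M :=
    eventually_nhdsWithin_of_eventually_nhds (Filter.Tendsto.eventually_lt_const (by positivity)
      tendsto_id)
  have hev3 : ∀ᶠ x in nhdsWithin 0 (Set.Ioi 0), (0:ℝ) < x := self_mem_nhdsWithin
  obtain ⟨ε, hεB, hεPT, hε0⟩ := (hev1.and (hev2.and hev3)).exists
  -- compact set
  set Kc : Set (Fin M → ℝ) := {P | (∀ i, ε ≤ P i) ∧ ∑ i, P i ≤ PT} with hKc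
  have hKsub : ∀ P ∈ F, ∀ i, P i ≤ PT := by
    intro P hP i
    rw [hF] at hP
    calc P i ≤ ∑ j, P j := Finset.single_le_sum (fun j _ => (hP.1 j).le) (Finset.mem_univ i)
    _ ≤ PT := hP.2
  have hKcF : Kc ⊆ F := by
    intro P hP
    rw [hF]
    exact ⟨fun i => lt_of_lt_of_le hε0 (hP.1 i), hP.2⟩
  have hKcpt : IsCompact Kc := by
    apply IsCompact.of_isClosed_subset (isCompact_univ_pi fun _ : Fin M => isCompact_Icc (a := ε) (b := PT))
    · have : Kc = (⋂ i, {P : Fin M → ℝ | ε ≤ P i}) ∩ {P | ∑ i, P i ≤ PT} := by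
        ext P; simp [hKc, Set.mem_iInter]
      rw [this]
      exact (isClosed_iInter fun i => isClosed_le continuous_const (continuous_apply i)).inter
        (isClosed_le (continuous_finset_sum _ fun i _ => continuous_apply i) continuous_const)
    · intro P hP
      rw [Set.mem_univ_pi]
      exact fun i => ⟨hP.1 i, hKsub P (hKcF hP) i⟩
  have hP0K : P0 ∈ Kc := ⟨fun i => hεPT.le, le_of_eq hP0sum⟩
  have hScont : ContinuousOn S Kc := by
    apply continuousOn_finset_sum
    intro i _
    apply (glog_contOn (ha i) (hKpos i)).comp (continuous_apply i).continuousOn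
    intro P hP
    exact lt_of_lt_of_le hε0 (hP.1 i)
  obtain ⟨Pm, hPmK, hPmMax⟩ := hKcpt.exists_isMaxOn ⟨P0, hP0K⟩ hScont
  have hPmF : Pm ∈ F := hKcF hPmK
  have hPmFpos : ∀ i, 0 < Pm i := by rw [hF] at hPmF; exact hPmF.1
  -- Pm maximizes S over all of F
  have hmax : ∀ Q ∈ F, S Q ≤ S Pm := by
    intro Q hQ
    have hQpos : ∀ i, 0 < Q i := by rw [hF] at hQ; exact hQ.1
    have hQPT : ∀ i, Q i ≤ PT := hKsub Q hQ
    by_cases hQK : Q ∈ Kc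
    · exact hPmMax hQK
    · have hsum : ∑ i, Q i ≤ PT := by rw [hF] at hQ; exact hQ.2
      have : ∃ i, Q i < ε := by
        by_contra h
        push_neg at h
        exact hQK ⟨h, hsum⟩
      obtain ⟨i, hi⟩ := this
      have hSQ : S Q = g i (Q i) + ∑ j ∈ Finset.univ.erase i, g j (Q j) :=
        (Finset.add_sum_erase _ _ (Finset.mem_univ i)).symm
      have h1 : g i (Q i) ≤ g i ε := ((hmono i) (hQpos i) hε0 hi).le
      have h2 : ∑ j ∈ Finset.univ.erase i, g j (Q j) ≤ ∑ j ∈ Finset.univ.erase i, g j PT := by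
        apply Finset.sum_le_sum
        intro j _
        exact (hmono j).monotoneOn (hQpos j) hPT (hQPT j)
      have h3 : g i ε < B i := hεB i
      have h4 : S P0 ≤ S Pm := hPmMax hP0K
      rw [hSQ]
      simp only [hB] at h3
      linarith
  -- existence and uniqueness
  refine ⟨Pm, ⟨hPmF, ?_⟩, ?_⟩
  · intro Q hQ
    rw [hSF Q hQ, hSF Pm hPmF]
    exact hmax Q hQ
  · rintro Q ⟨hQF, hQmax⟩
    have hQpos : ∀ i, 0 < Q i := by rw [hF] at hQF; exact hQF.1
    by_contra hne
    -- both are maximizers with equal value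
    have hQm : S Pm ≤ S Q := by
      have := hQmax Pm hPmF
      rwa [hSF Pm hPmF, hSF Q hQF] at this
    have hmQ : S Q ≤ S Pm := hmax Q hQF
    have heq : S Q = S Pm := le_antisymm hmQ hQm
    -- midpoint
    set R : Fin M → ℝ := fun i => (Q i + Pm i) / 2 with hR
    have hRpos : ∀ i, 0 < R i := fun i => by
      have := hQpos i; have := hPmFpos i; simp only [hR]; positivity
    have hRF : R ∈ F := by
      rw [hF]
      refine ⟨hRpos, ?_⟩
      have h1 : ∑ i, R i = ((∑ i, Q i) + ∑ i, Pm i) / 2 := by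
        rw [← Finset.sum_add_distrib, ← Finset.sum_div]
      rw [hF] at hQF hPmF
      rw [h1]
      linarith [hQF.2, hPmF.2]
    obtain ⟨i0, hi0⟩ := Function.ne_iff.1 hne
    have hkey : ∑ i, ((g i (Q i) + g i (Pm i)) / 2) < ∑ i, g i (R i) := by
      apply Finset.sum_lt_sum
      · intro i _
        have := (hconc i).concaveOn.2 (Set.mem_Ioi.2 (hQpos i)) (Set.mem_Ioi.2 (hPmFpos i))
          (by norm_num : (0:ℝ) ≤ 1/2) (by norm_num : (0:ℝ) ≤ 1/2) (by norm_num)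
        simp only [smul_eq_mul] at this
        calc (g i (Q i) + g i (Pm i)) / 2 = 1/2 * g i (Q i) + 1/2 * g i (Pm i) := by ring
        _ ≤ g i (1/2 * Q i + 1/2 * Pm i) := this
        _ = g i (R i) := by rw [hR]; ring_nf
      · refine ⟨i0, Finset.mem_univ i0, ?_⟩
        have := (hconc i0).2 (Set.mem_Ioi.2 (hQpos i0)) (Set.mem_Ioi.2 (hPmFpos i0)) hi0
          (by norm_num : (0:ℝ) < 1/2) (by norm_num : (0:ℝ) < 1/2) (by norm_num)
        simp only [smul_eq_mul] at this
        calc (g i0 (Q i0) + g i0 (Pm i0)) / 2 = 1/2 * g i0 (Q i0) + 1/2 * g i0 (Pm i0) := by ring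
        _ < g i0 (1/2 * Q i0 + 1/2 * Pm i0) := this
        _ = g i0 (R i0) := by rw [hR]; ring_nf
    have hlhs : ∑ i, ((g i (Q i) + g i (Pm i)) / 2) = (S Q + S Pm) / 2 := by
      rw [hS]
      rw [← Finset.sum_add_distrib, ← Finset.sum_div]
    have hRle : S R ≤ S Pm := hmax R hRF
    rw [hlhs, heq] at hkey
    simp only [hS] at hkey hRle
    linarith
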